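/- Let m ≥ 1 and n_1, ..., n_m be positive reals, ρ > 0. Consider the game on N = {g, 1, ..., m} with ξ_lin(S) = 0 if g ∉ S and ξ_lin(S) = ρ·∑_{i ∈ S \ {g}} n_i if g ∈ S. Then φ_g(ξ_lin) = ρ(∑_i n_i)/2 and φ_i(ξ_lin) = ρ n_i/2 for each agent i; i.e. under the linear value with a founder, the founder takes exactly half the total value and each agent takes half of its own contribution. -/

import Mathlib

open Finset Filter Topology

-- choose * (k+1)! * (n-k)! = (k+1) * n!
lemma L1 (n k : ℕ) (hk : k ≤ n) :
    (n.choose k) * ((k+1).factorial * (n-k).factorial) = (k+1) * n.factorial := by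
  rw [Nat.factorial_succ]
  have := Nat.choose_mul_factorial_mul_factorial hk
  calc n.choose k * ((k+1) * k.factorial * (n-k).factorial)
      = (k+1) * (n.choose k * k.factorial * (n-k).factorial) := by ring
    _ = (k+1) * n.factorial := by rw [this]

lemma Lgauss (n : ℕ) : ∑ k ∈ range (n+1), ((k : ℝ) + 1) = (n+1)*(n+2)/2 := by
  induction n with
  | zero => norm_num
  | succ n ih =>
      rw [Finset.sum_range_succ, ih]
      push_cast
      ring

lemma L2 (n : ℕ) :
    ∑ k ∈ range (n+1),
      (n.choose k : ℝ) * (((k+1).factorial : ℝ) * ((n-k).factorial : ℝ) / ((n+2).factorial : ℝ))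
      = 1/2 := by
  have h : ∀ k ∈ range (n+1),
      (n.choose k : ℝ) * (((k+1).factorial : ℝ) * ((n-k).factorial : ℝ) / ((n+2).factorial : ℝ))
      = ((k:ℝ)+1) / ((n+1)*(n+2)) := by
    intro k hk
    rw [mem_range, Nat.lt_succ_iff] at hk
    have h1 : ((n.choose k : ℝ)) * (((k+1).factorial : ℝ) * ((n-k).factorial : ℝ))
        = ((k:ℝ)+1) * (n.factorial : ℝ) := by
      have := L1 n k hk
      exact_mod_cast congrArg (Nat.cast (R := ℝ)) this
    have h2 : ((n+2).factorial : ℝ) = ((n:ℝ)+2) * (((n:ℝ)+1) * (n.factorial : ℝ)) := by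
      rw [show n + 2 = (n+1)+1 from rfl, Nat.factorial_succ, Nat.factorial_succ]
      push_cast; ring
    have hf : (n.factorial : ℝ) ≠ 0 := by positivity
    rw [mul_div_assoc'] at *
    rw [h1, h2]
    field_simp
  rw [Finset.sum_congr rfl h, ← Finset.sum_div, Lgauss]
  have h1 : ((n:ℝ)+1) ≠ 0 := by positivity
  have h2 : ((n:ℝ)+2) ≠ 0 := by positivity
  field_simp

-- key half lemma
lemma Lhalf {γ : Type*} [DecidableEq γ] (X : Finset γ) (n : ℕ) (hX : X.card = n) :
    ∑ T ∈ X.powerset,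
      (((T.card+1).factorial : ℝ) * ((n - T.card).factorial : ℝ) / ((n+2).factorial : ℝ))
      = 1/2 := by
  rw [Finset.sum_powerset_apply_card
    (f := fun c => (((c+1).factorial : ℝ) * ((n - c).factorial : ℝ) / ((n+2).factorial : ℝ))), hX]
  simp only [nsmul_eq_mul]
  exact L2 n

lemma Lfilter {γ : Type*} [DecidableEq γ] (A : Finset γ) (i : γ) (hi : i ∈ A) :
    A.powerset.filter (fun S => i ∈ S) = (A.erase i).powerset.image (insert i) := by
  ext S
  simp only [mem_filter, mem_powerset, mem_image]
  constructor
  · rintro ⟨hS, hiS⟩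
    exact ⟨S.erase i, fun x hx => Finset.mem_erase.2 ⟨(Finset.mem_erase.1 hx).1, hS (Finset.mem_erase.1 hx).2⟩,
      Finset.insert_erase hiS⟩
  · rintro ⟨T, hT, rfl⟩
    refine ⟨Finset.insert_subset hi fun x hx => (Finset.erase_subset _ _) (hT hx), Finset.mem_insert_self _ _⟩

lemma Lsum_insert {γ : Type*} [DecidableEq γ] (A : Finset γ) (i : γ) (hi : i ∈ A) (g : Finset γ → ℝ) :
    ∑ S ∈ A.powerset.filter (fun S => i ∈ S), g S = ∑ T ∈ (A.erase i).powerset, g (insert i T) := by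
  rw [Lfilter A i hi, Finset.sum_image]
  intro x hx y hy hxy
  rw [mem_coe, mem_powerset] at hx hy
  have hxi : i ∉ x := fun h => (Finset.mem_erase.1 (hx h)).1 rfl
  have hyi : i ∉ y := fun h => (Finset.mem_erase.1 (hy h)).1 rfl
  have : (insert i x).erase i = (insert i y).erase i := by rw [hxy]
  rwa [Finset.erase_insert hxi, Finset.erase_insert hyi] at this

lemma Lkey (m : ℕ) (hm : 1 ≤ m) {γ : Type*} [DecidableEq γ] (X : Finset γ)
    (hX : X.card = m - 1) :
    ∑ T ∈ X.powerset,
      (((T.card+1).factorial : ℝ) * (((m+1) - (T.card+1) - 1).factorial : ℝ) / ((m+1).factorial : ℝ))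
      = 1/2 := by
  have h1 : m + 1 = (m-1) + 2 := by omega
  have h2 : ∀ t : ℕ, (m+1) - (t+1) - 1 = (m-1) - t := by intro t; omega
  calc ∑ T ∈ X.powerset,
      (((T.card+1).factorial : ℝ) * (((m+1) - (T.card+1) - 1).factorial : ℝ) / ((m+1).factorial : ℝ))
      = ∑ T ∈ X.powerset,
      (((T.card+1).factorial : ℝ) * (((m-1) - T.card).factorial : ℝ) / (((m-1)+2).factorial : ℝ)) := by
        refine Finset.sum_congr rfl fun T _ => ?_
        rw [h2, ← h1]
    _ = 1/2 := Lhalf X (m-1) hX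

noncomputable def shapley {α : Type*} [DecidableEq α] (N : Finset α) (ν : Finset α → ℝ)
    (i : α) : ℝ :=
  ∑ S ∈ (N.erase i).powerset,
    (((S.card.factorial : ℝ) * ((N.card - S.card - 1).factorial : ℝ)) / (N.card.factorial : ℝ)) *
      (ν (insert i S) - ν S)

lemma Linner (m : ℕ) (hm : 1 ≤ m) {γ : Type*} [DecidableEq γ] (A : Finset γ)
    (hA : A.card = m) (a : γ) (ha : a ∈ A) (c : ℝ) :
    ∑ S ∈ A.powerset,
      (if a ∈ S then
        ((S.card.factorial : ℝ) * (((m+1) - S.card - 1).factorial : ℝ)) / ((m+1).factorial : ℝ) * c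
      else 0) = c / 2 := by
  rw [← Finset.sum_filter]
  rw [Lsum_insert A a ha]
  have hcard : ∀ T ∈ (A.erase a).powerset, (insert a T).card = T.card + 1 := by
    intro T hT
    rw [mem_powerset] at hT
    exact Finset.card_insert_of_notMem fun h => (Finset.mem_erase.1 (hT h)).1 rfl
  have : ∀ T ∈ (A.erase a).powerset,
      ((insert a T).card.factorial : ℝ) * (((m+1) - (insert a T).card - 1).factorial : ℝ)
        / ((m+1).factorial : ℝ) * c
      = (((T.card+1).factorial : ℝ) * (((m+1) - (T.card+1) - 1).factorial : ℝ)
        / ((m+1).factorial : ℝ)) * c := by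
    intro T hT; rw [hcard T hT]
  rw [Finset.sum_congr rfl this, ← Finset.sum_mul,
    Lkey m hm (A.erase a) (by rw [Finset.card_erase_of_mem ha, hA])]
  ring

theorem stmt_19 (m : ℕ) (hm : 1 ≤ m) (nv : Fin m → ℝ) (hnv : ∀ i, 0 < nv i)
    (ρ : ℝ) (hρ : 0 < ρ)
    (ξ : Finset (Option (Fin m)) → ℝ)
    (hξ : ∀ S, ξ S = if none ∈ S then
      ρ * ∑ i ∈ Finset.univ.filter (fun i : Fin m => some i ∈ S), nv i else 0) :
    shapley Finset.univ ξ none = ρ * (∑ i, nv i) / 2 ∧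
    (∀ i : Fin m, shapley Finset.univ ξ (some i) = ρ * nv i / 2) := by
  have hN : (Finset.univ : Finset (Option (Fin m))).card = m + 1 := by
    simp [Finset.card_univ]
  constructor
  · simp only [shapley, hN]
    have step1 : ∀ S ∈ ((Finset.univ : Finset (Option (Fin m))).erase none).powerset,
        (((S.card.factorial : ℝ) * (((m+1) - S.card - 1).factorial : ℝ)) / ((m+1).factorial : ℝ)) *
          (ξ (insert none S) - ξ S)
        = ∑ i : Fin m, (if some i ∈ S then
            (((S.card.factorial : ℝ) * (((m+1) - S.card - 1).factorial : ℝ)) / ((m+1).factorial : ℝ))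
              * (ρ * nv i) else 0) := by
      intro S hS
      rw [mem_powerset] at hS
      have hnone : none ∉ S := fun h => (Finset.mem_erase.1 (hS h)).1 rfl
      have hfil : Finset.univ.filter (fun i : Fin m => some i ∈ insert none S)
          = Finset.univ.filter (fun i : Fin m => some i ∈ S) := by
        apply Finset.filter_congr
        intro j _
        simp [Finset.mem_insert]
      rw [hξ, hξ, if_pos (Finset.mem_insert_self _ _), if_neg hnone, sub_zero, hfil,
        Finset.sum_filter, Finset.mul_sum, Finset.mul_sum]
      refine Finset.sum_congr rfl fun j _ => ?_
      by_cases h : some j ∈ S <;> simp [h] <;> ring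
    rw [Finset.sum_congr rfl step1, Finset.sum_comm]
    have step2 : ∀ i : Fin m,
        ∑ S ∈ ((Finset.univ : Finset (Option (Fin m))).erase none).powerset,
          (if some i ∈ S then
            (((S.card.factorial : ℝ) * (((m+1) - S.card - 1).factorial : ℝ)) / ((m+1).factorial : ℝ))
              * (ρ * nv i) else 0) = ρ * nv i / 2 := by
      intro i
      rw [Linner m hm _ (by rw [Finset.card_erase_of_mem (Finset.mem_univ _), hN]; omega)
        (some i) (Finset.mem_erase.2 ⟨by simp, Finset.mem_univ _⟩) (ρ * nv i)]
    rw [Finset.sum_congr rfl (fun i _ => step2 i), ← Finset.sum_div, ← Finset.mul_sum]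
  · intro i
    simp only [shapley, hN]
    have hmarg : ∀ S ∈ ((Finset.univ : Finset (Option (Fin m))).erase (some i)).powerset,
        ξ (insert (some i) S) - ξ S = if none ∈ S then ρ * nv i else 0 := by
      intro S hS
      rw [mem_powerset] at hS
      have hsi : some i ∉ S := fun h => (Finset.mem_erase.1 (hS h)).1 rfl
      rw [hξ, hξ]
      by_cases h : none ∈ S
      · rw [if_pos h, if_pos (Finset.mem_insert_of_mem h), if_pos h]
        have hfil : Finset.univ.filter (fun j : Fin m => some j ∈ insert (some i) S)
            = insert i (Finset.univ.filter (fun j : Fin m => some j ∈ S)) := by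
          ext j
          simp [Finset.mem_insert]
        rw [hfil, Finset.sum_insert (by simp [hsi])]
        ring
      · rw [if_neg h, if_neg (by simp [Finset.mem_insert, h]), if_neg h]
        simp
    have step : ∀ S ∈ ((Finset.univ : Finset (Option (Fin m))).erase (some i)).powerset,
        (((S.card.factorial : ℝ) * (((m+1) - S.card - 1).factorial : ℝ)) / ((m+1).factorial : ℝ)) *
          (ξ (insert (some i) S) - ξ S)
        = (if none ∈ S then
            (((S.card.factorial : ℝ) * (((m+1) - S.card - 1).factorial : ℝ)) / ((m+1).factorial : ℝ))
              * (ρ * nv i) else 0) := by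
      intro S hS
      rw [hmarg S hS]
      by_cases h : none ∈ S <;> simp [h]
    rw [Finset.sum_congr rfl step,
      Linner m hm _ (by rw [Finset.card_erase_of_mem (Finset.mem_univ _), hN]; omega)
        none (Finset.mem_erase.2 ⟨by simp, Finset.mem_univ _⟩) (ρ * nv i)]
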